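/- Let p ≥ 7 be prime, let x be the largest integer at most p/4 - 1, and suppose F ⊆ (Z/pZ)^ℓ is a Z/pZ-covering family of size N. Then for every z ∈ (Z/pZ)^ℓ, there is at most one vector v ∈ F such that z_i - v_i ∈ {-x,...,x} (mod p) for all coordinates i. Consequently N ≤ (p/(2x+1))^ℓ, and hence ℓ ≥ log N / log(2 + 12/(p-6)). -/
import Mathlib


/-- Lower bound for `ZMod p`-covering families: with `x` the largest integer at most
`p/4 - 1`, (a) for every `z` at most one `v ∈ F` is within `{-x,…,x}` of `z` in every
coordinate, (b) `N ≤ (p/(2x+1))^ℓ`, and (c) `ℓ ≥ log N / log (2 + 12/(p-6))`. -/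
theorem stmt2 (p ℓ N : ℕ) (hp : p.Prime) (hp7 : 7 ≤ p)
    (F : Finset (Fin ℓ → ZMod p)) (hcard : F.card = N)
    (hcov : ∀ v ∈ F, ∀ w ∈ F, v ≠ w → ∀ s : ZMod p, ∃ i, v i - w i = s) :
    (∀ z : Fin ℓ → ZMod p, ∀ v ∈ F, ∀ w ∈ F,
        (∀ i, ∃ j : ℤ, |j| ≤ ((p / 4 - 1 : ℕ) : ℤ) ∧ z i - v i = (j : ZMod p)) →
        (∀ i, ∃ j : ℤ, |j| ≤ ((p / 4 - 1 : ℕ) : ℤ) ∧ z i - w i = (j : ZMod p)) → v = w) ∧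
    (N : ℝ) ≤ ((p : ℝ) / (2 * ((p / 4 - 1 : ℕ) : ℝ) + 1)) ^ ℓ ∧
    Real.log N / Real.log (2 + 12 / ((p : ℝ) - 6)) ≤ (ℓ : ℝ) := by
  classical
  haveI : NeZero p := ⟨hp.ne_zero⟩
  set x : ℕ := p / 4 - 1 with hxdef
  have hx4 : 4 * x + 4 ≤ p ∧ p ≤ 4 * x + 8 := by omega
  -- cast injectivity on small integers
  have castinj : ∀ a : ℤ, |a| ≤ 4 * (x : ℤ) + 1 → ((a : ZMod p) = 0) → a = 0 := by
    intro a ha h0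
    have hdvd : (p : ℤ) ∣ a := (ZMod.intCast_zmod_eq_zero_iff_dvd a p).mp h0
    by_contra hne
    have := Int.le_of_dvd (abs_pos.mpr hne) ((dvd_abs _ _).mpr hdvd)
    omega
  -- part (a)
  have parta : (∀ z : Fin ℓ → ZMod p, ∀ v ∈ F, ∀ w ∈ F,
      (∀ i, ∃ j : ℤ, |j| ≤ ((x : ℕ) : ℤ) ∧ z i - v i = (j : ZMod p)) →
      (∀ i, ∃ j : ℤ, |j| ≤ ((x : ℕ) : ℤ) ∧ z i - w i = (j : ZMod p)) → v = w) := by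
    intro z v hv w hw h1 h2
    by_contra hne
    obtain ⟨i, hi⟩ := hcov v hv w hw hne (((2 * x + 1 : ℤ) : ZMod p))
    obtain ⟨j, hj, hje⟩ := h1 i
    obtain ⟨k, hk, hke⟩ := h2 i
    have hvw : v i - w i = ((k - j : ℤ) : ZMod p) := by
      push_cast
      rw [← hje, ← hke]; ring
    have h0 : (((2 * x + 1 : ℤ) - (k - j) : ℤ) : ZMod p) = 0 := by
      have h := hi.symm.trans hvw
      push_cast at h ⊢
      linear_combination h
    have := castinj _ (by rw [abs_le] at hj hk ⊢; omega) h0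
    rw [abs_le] at hj hk
    omega
  refine ⟨parta, ?_⟩
  -- counting
  set S : Finset ℤ := Finset.Icc (-(x : ℤ)) (x : ℤ) with hSdef
  have hScard : S.card = 2 * x + 1 := by
    rw [hSdef, Int.card_Icc]; omega
  set T : Finset (Fin ℓ → ℤ) := Fintype.piFinset (fun _ => S) with hTdef
  have hTcard : T.card = (2 * x + 1) ^ ℓ := by
    rw [hTdef, Fintype.card_piFinset]
    simp [hScard]
  have key : (F ×ˢ T).card ≤ (Finset.univ : Finset (Fin ℓ → ZMod p)).card := by
    apply Finset.card_le_card_of_injOn (fun q => fun i => q.1 i + ((q.2 i : ℤ) : ZMod p))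
    · intro _ _; exact Finset.mem_univ _
    · intro a ha b hb hab
      rw [Finset.mem_coe, Finset.mem_product] at ha hb
      have hmemS : ∀ i, a.2 i ∈ S ∧ b.2 i ∈ S := by
        intro i
        exact ⟨Fintype.mem_piFinset.mp ha.2 i, Fintype.mem_piFinset.mp hb.2 i⟩
      set z : Fin ℓ → ZMod p := fun i => a.1 i + ((a.2 i : ℤ) : ZMod p) with hz
      have hzb : ∀ i, z i = b.1 i + ((b.2 i : ℤ) : ZMod p) := fun i => congrFun hab i
      have h1 : ∀ i, ∃ j : ℤ, |j| ≤ ((x : ℕ) : ℤ) ∧ z i - a.1 i = (j : ZMod p) := by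
        intro i
        refine ⟨a.2 i, ?_, by rw [hz]; ring⟩
        have := (hmemS i).1
        rw [hSdef, Finset.mem_Icc] at this
        rw [abs_le]; omega
      have h2 : ∀ i, ∃ j : ℤ, |j| ≤ ((x : ℕ) : ℤ) ∧ z i - b.1 i = (j : ZMod p) := by
        intro i
        refine ⟨b.2 i, ?_, by rw [hzb i]; ring⟩
        have := (hmemS i).2
        rw [hSdef, Finset.mem_Icc] at this
        rw [abs_le]; omega
      have heq1 : a.1 = b.1 := parta z a.1 ha.1 b.1 hb.1 h1 h2
      have heq2 : a.2 = b.2 := by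
        funext i
        have : ((a.2 i - b.2 i : ℤ) : ZMod p) = 0 := by
          have := hzb i
          rw [hz, heq1] at this
          push_cast
          rw [sub_eq_zero]
          exact add_left_cancel this
        have hm1 := (hmemS i).1; have hm2 := (hmemS i).2
        rw [hSdef, Finset.mem_Icc] at hm1 hm2
        have := castinj _ (by rw [abs_le]; omega) this
        omega
      exact Prod.ext heq1 heq2
  rw [Finset.card_product, hcard, hTcard, Finset.card_univ] at key
  have huniv : Fintype.card (Fin ℓ → ZMod p) = p ^ ℓ := by
    simp [ZMod.card]
  rw [huniv] at key
  -- part (b)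
  have hx1pos : (0 : ℝ) < 2 * ((x : ℕ) : ℝ) + 1 := by positivity
  have partb : (N : ℝ) ≤ ((p : ℝ) / (2 * ((x : ℕ) : ℝ) + 1)) ^ ℓ := by
    rw [div_pow, le_div_iff₀ (by positivity)]
    have : (2 * ((x : ℕ) : ℝ) + 1) ^ ℓ = (((2 * x + 1 : ℕ)) : ℝ) ^ ℓ := by push_cast; ring
    rw [this]
    exact_mod_cast key
  refine ⟨partb, ?_⟩
  -- part (c)
  have hp6 : (0 : ℝ) < (p : ℝ) - 6 := by
    have : (7 : ℝ) ≤ (p : ℝ) := by exact_mod_cast hp7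
    linarith
  have hbgt1 : (1 : ℝ) < 2 + 12 / ((p : ℝ) - 6) := by
    have : 0 < 12 / ((p : ℝ) - 6) := by positivity
    linarith
  have hlogb : 0 < Real.log (2 + 12 / ((p : ℝ) - 6)) := Real.log_pos hbgt1
  rw [div_le_iff₀ hlogb]
  have hratio : (p : ℝ) / (2 * ((x : ℕ) : ℝ) + 1) ≤ 2 + 12 / ((p : ℝ) - 6) := by
    have hb : (2 : ℝ) + 12 / ((p : ℝ) - 6) = 2 * (p : ℝ) / ((p : ℝ) - 6) := by
      field_simp; ring
    rw [hb, div_le_div_iff₀ hx1pos hp6]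
    have hx8 : ((p : ℝ)) ≤ 4 * ((x : ℕ) : ℝ) + 8 := by exact_mod_cast hx4.2
    nlinarith [hx8, (by exact_mod_cast hp.pos : (0:ℝ) < (p:ℝ))]
  have hNle : (N : ℝ) ≤ (2 + 12 / ((p : ℝ) - 6)) ^ ℓ := by
    refine partb.trans (pow_le_pow_left₀ (by positivity) hratio ℓ)
  rcases Nat.eq_zero_or_pos N with hN0 | hNpos
  · subst hN0
    simp only [Nat.cast_zero, Real.log_zero]
    exact mul_nonneg (Nat.cast_nonneg ℓ) hlogb.le
  · calc Real.log N ≤ Real.log ((2 + 12 / ((p : ℝ) - 6)) ^ ℓ) := by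
          apply Real.log_le_log (by exact_mod_cast hNpos) hNle
      _ = (ℓ : ℝ) * Real.log (2 + 12 / ((p : ℝ) - 6)) := by
          rw [Real.log_pow]
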